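/- For every δ with 0 < δ ≤ 1/2 and every η > 0 there exists Q₀ such that for all real Q ≥ Q₀, every squarefree positive integer n with n ≤ Q, and every real z with 1 ≤ z ≤ Q^δ, the number of divisors of n that are at most z satisfies τ(n, z) ≤ exp((δ·log(1/δ) + (1−δ)·log(1/(1−δ)) + η)·(log Q)/(log log Q)). -/

import Mathlib

open Finset

lemma count_aux (n : ℕ) (hn : 0 < n) (hsq : Squarefree n) (z y : ℝ) (hy : 0 ≤ y) (m : ℕ)
    (hm : ∀ j : ℕ, y ^ j ≤ z → j ≤ m) :
    (n.divisors.filter (fun d : ℕ => (d : ℝ) ≤ z)).card ≤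
      2 ^ (n.primeFactors.filter (fun p : ℕ => (p : ℝ) ≤ y)).card *
        ∑ j ∈ Finset.range (m + 1),
          ((n.primeFactors.filter (fun p : ℕ => ¬ (p : ℝ) ≤ y)).card).choose j := by
  classical
  set Ps := n.primeFactors.filter (fun p : ℕ => (p : ℝ) ≤ y) with hPs
  set Pl := n.primeFactors.filter (fun p : ℕ => ¬ (p : ℝ) ≤ y) with hPl
  set Tgt := Ps.powerset ×ˢ (Pl.powerset.filter (fun T => T.card ≤ m)) with hTgt
  have key : (n.divisors.filter (fun d : ℕ => (d : ℝ) ≤ z)).card ≤ Tgt.card := by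
    apply Finset.card_le_card_of_injOn
      (fun d => (d.primeFactors.filter (fun p : ℕ => (p : ℝ) ≤ y),
                 d.primeFactors.filter (fun p : ℕ => ¬ (p : ℝ) ≤ y)))
    · intro d hd
      simp only [Finset.mem_coe, Finset.mem_filter, Nat.mem_divisors] at hd
      obtain ⟨⟨hdvd, hn0⟩, hdz⟩ := hd
      have hsub : d.primeFactors ⊆ n.primeFactors := Nat.primeFactors_mono hdvd hn0
      have hd0 : 0 < d := Nat.pos_of_dvd_of_pos hdvd hn
      have hdsq : Squarefree d := Squarefree.squarefree_of_dvd hdvd hsq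
      simp only [Finset.mem_coe, hTgt, Finset.mem_product, Finset.mem_powerset, Finset.mem_filter]
      refine ⟨fun p hp => ?_, fun p hp => ?_, ?_⟩
      · exact Finset.mem_filter.2 ⟨hsub (Finset.mem_filter.1 hp).1, (Finset.mem_filter.1 hp).2⟩
      · exact Finset.mem_filter.2 ⟨hsub (Finset.mem_filter.1 hp).1, (Finset.mem_filter.1 hp).2⟩
      · -- card bound
        set T := d.primeFactors.filter (fun p : ℕ => ¬ (p : ℝ) ≤ y) with hT
        apply hm
        have h1 : y ^ T.card ≤ ∏ p ∈ T, (p : ℝ) := by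
          rw [← Finset.prod_const]
          refine Finset.prod_le_prod (fun _ _ => hy) (fun p hp => ?_)
          simp only [hT, Finset.mem_filter] at hp
          exact (not_le.1 hp.2).le
        have h2 : (∏ p ∈ T, p) ∣ d := by
          calc (∏ p ∈ T, p) ∣ ∏ p ∈ d.primeFactors, p :=
              Finset.prod_dvd_prod_of_subset _ _ _ (Finset.filter_subset _ _)
            _ = d := Nat.prod_primeFactors_of_squarefree hdsq
        have h3 : ((∏ p ∈ T, p : ℕ) : ℝ) ≤ (d : ℝ) := by
          exact_mod_cast Nat.le_of_dvd hd0 h2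
        calc y ^ T.card ≤ ∏ p ∈ T, (p : ℝ) := h1
          _ = ((∏ p ∈ T, p : ℕ) : ℝ) := by push_cast; ring
          _ ≤ (d : ℝ) := h3
          _ ≤ z := hdz
    · intro d1 h1 d2 h2 heq
      simp only [Finset.coe_filter, Set.mem_setOf_eq, Nat.mem_divisors] at h1 h2
      simp only [Prod.mk.injEq] at heq
      have hpf : d1.primeFactors = d2.primeFactors := by
        calc d1.primeFactors
            = d1.primeFactors.filter (fun p : ℕ => (p : ℝ) ≤ y) ∪
              d1.primeFactors.filter (fun p : ℕ => ¬ (p : ℝ) ≤ y) :=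
            (Finset.filter_union_filter_not_eq _ _).symm
          _ = d2.primeFactors.filter (fun p : ℕ => (p : ℝ) ≤ y) ∪
              d2.primeFactors.filter (fun p : ℕ => ¬ (p : ℝ) ≤ y) := by
              rw [heq.1, heq.2]
          _ = d2.primeFactors := Finset.filter_union_filter_not_eq _ _
      have hsq1 : Squarefree d1 := Squarefree.squarefree_of_dvd h1.1.1 hsq
      have hsq2 : Squarefree d2 := Squarefree.squarefree_of_dvd h2.1.1 hsq
      calc d1 = ∏ p ∈ d1.primeFactors, p := (Nat.prod_primeFactors_of_squarefree hsq1).symm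
        _ = ∏ p ∈ d2.primeFactors, p := by rw [hpf]
        _ = d2 := Nat.prod_primeFactors_of_squarefree hsq2
  refine key.trans ?_
  rw [hTgt, Finset.card_product, Finset.card_powerset]
  refine Nat.mul_le_mul_left _ ?_
  have hsub : Pl.powerset.filter (fun T => T.card ≤ m) ⊆
      (Finset.range (m + 1)).biUnion (fun j => Pl.powersetCard j) := by
    intro T hT
    simp only [Finset.mem_filter, Finset.mem_powerset] at hT
    exact Finset.mem_biUnion.2 ⟨T.card, Finset.mem_range.2 (Nat.lt_succ_of_le hT.2),
      Finset.mem_powersetCard.2 ⟨hT.1, rfl⟩⟩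
  calc (Pl.powerset.filter (fun T => T.card ≤ m)).card
      ≤ ((Finset.range (m + 1)).biUnion (fun j => Pl.powersetCard j)).card :=
        Finset.card_le_card hsub
    _ ≤ ∑ j ∈ Finset.range (m + 1), (Pl.powersetCard j).card := Finset.card_biUnion_le
    _ = ∑ j ∈ Finset.range (m + 1), Pl.card.choose j := by
        simp [Finset.card_powersetCard]

lemma sum_choose_le (K m : ℕ) (x : ℝ) (hx : 0 < x) (hx1 : x ≤ 1) :
    (∑ j ∈ Finset.range (m + 1), (K.choose j : ℝ)) * x ^ m ≤ (1 + x) ^ K := by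
  have h1 : (∑ j ∈ Finset.range (m + 1), (K.choose j : ℝ)) * x ^ m
      ≤ ∑ j ∈ Finset.range (m + 1), (K.choose j : ℝ) * x ^ j := by
    rw [Finset.sum_mul]
    refine Finset.sum_le_sum fun j hj => ?_
    exact mul_le_mul_of_nonneg_left
      (pow_le_pow_of_le_one hx.le hx1 (Nat.le_of_lt_succ (Finset.mem_range.1 hj)))
      (Nat.cast_nonneg _)
  have h2 : ∑ j ∈ Finset.range (m + 1), (K.choose j : ℝ) * x ^ j
      ≤ ∑ j ∈ Finset.range (K + m + 1), (K.choose j : ℝ) * x ^ j :=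
    Finset.sum_le_sum_of_subset_of_nonneg (Finset.range_subset_range.2 (by omega))
      (fun j _ _ => mul_nonneg (Nat.cast_nonneg _) (pow_nonneg hx.le _))
  have h3 : ∑ j ∈ Finset.range (K + m + 1), (K.choose j : ℝ) * x ^ j
      = ∑ j ∈ Finset.range (K + 1), (K.choose j : ℝ) * x ^ j := by
    symm
    refine Finset.sum_subset (Finset.range_subset_range.2 (by omega)) fun j _ hj => ?_
    have : K.choose j = 0 := Nat.choose_eq_zero_of_lt (by
      simp only [Finset.mem_range, not_lt] at hj ⊢; omega)
    simp [this]
  have h4 : ∑ j ∈ Finset.range (K + 1), (K.choose j : ℝ) * x ^ j = (1 + x) ^ K := by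
    rw [add_comm (1 : ℝ) x, add_pow]
    refine Finset.sum_congr rfl fun j _ => ?_
    ring
  linarith


/-- For every δ with 0 < δ ≤ 1/2 and every η > 0 there exists Q₀ such that for all
real Q ≥ Q₀, every squarefree positive integer n ≤ Q and every real z with
1 ≤ z ≤ Q^δ, the number τ(n,z) of divisors of n that are at most z satisfies
τ(n,z) ≤ exp((δ·log(1/δ) + (1−δ)·log(1/(1−δ)) + η)·(log Q)/(log log Q)). -/
theorem stmt_8 :
    ∀ δ : ℝ, 0 < δ → δ ≤ 1 / 2 → ∀ η : ℝ, 0 < η → ∃ Q₀ : ℝ, ∀ Q : ℝ, Q₀ ≤ Q →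
      ∀ n : ℕ, 0 < n → Squarefree n → (n : ℝ) ≤ Q →
        ∀ z : ℝ, 1 ≤ z → z ≤ Q ^ δ →
        ((n.divisors.filter (fun d : ℕ => (d : ℝ) ≤ z)).card : ℝ) ≤
          Real.exp ((δ * Real.log (1 / δ) + (1 - δ) * Real.log (1 / (1 - δ)) + η) *
            (Real.log Q / Real.log (Real.log Q))) := by
  intro δ hδ0 hδ2 η hη
  have hδ1 : δ < 1 := by linarith
  set ε := η / 2 with hεdef
  have hε0 : 0 < ε := by positivity
  set α := 1 / (1 + ε) with hαdef
  have hα0 : 0 < α := by positivity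
  have hα1 : α < 1 := by
    rw [hαdef, div_lt_one (by positivity)]; linarith
  set β := (1 - α) / 2 with hβdef
  have hβ0 : 0 < β := by rw [hβdef]; linarith
  -- eventual conditions
  have hEv : ∀ᶠ Q : ℝ in Filter.atTop, 3 ≤ Real.log Q ∧
      (Real.log Q) ^ α * Real.log 2 * Real.log (Real.log Q) ≤ ε * Real.log Q := by
    have hT : Filter.Tendsto Real.log Filter.atTop Filter.atTop := Real.tendsto_log_atTop
    have h2 : ∀ᶠ t : ℝ in Filter.atTop, t ^ α * Real.log 2 * Real.log t ≤ ε * t := by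
      have h3 : ∀ᶠ t : ℝ in Filter.atTop, Real.log 2 / β ≤ ε * t ^ β :=
        ((tendsto_rpow_atTop hβ0).const_mul_atTop hε0).eventually_ge_atTop _
      filter_upwards [h3, Filter.eventually_ge_atTop (1 : ℝ)] with t h3 ht1
      have ht0 : (0 : ℝ) < t := lt_of_lt_of_le one_pos ht1
      have hlog : Real.log t ≤ t ^ β / β := Real.log_le_rpow_div ht0.le hβ0
      have hta : (0 : ℝ) ≤ t ^ α := Real.rpow_nonneg ht0.le _
      have htb : (0 : ℝ) ≤ t ^ β := Real.rpow_nonneg ht0.le _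
      have step1 : t ^ α * Real.log 2 * Real.log t ≤ t ^ α * Real.log 2 * (t ^ β / β) :=
        mul_le_mul_of_nonneg_left hlog (mul_nonneg hta (Real.log_nonneg one_le_two))
      have step2 : t ^ α * Real.log 2 * (t ^ β / β) = (Real.log 2 / β) * (t ^ α * t ^ β) := by
        ring
      have step3 : (Real.log 2 / β) * (t ^ α * t ^ β) ≤ (ε * t ^ β) * (t ^ α * t ^ β) :=
        mul_le_mul_of_nonneg_right h3 (mul_nonneg hta htb)
      have step5 : t ^ α * t ^ β * t ^ β = t := by
        rw [← Real.rpow_add ht0, ← Real.rpow_add ht0]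
        have : α + β + β = 1 := by rw [hβdef]; ring
        rw [this, Real.rpow_one]
      have step4 : (ε * t ^ β) * (t ^ α * t ^ β) = ε * t := by
        rw [show (ε * t ^ β) * (t ^ α * t ^ β) = ε * (t ^ α * t ^ β * t ^ β) by ring, step5]
      linarith
    exact hT.eventually ((Filter.eventually_ge_atTop (3 : ℝ)).and h2)
  obtain ⟨Q₀, hQ₀⟩ := Filter.eventually_atTop.1 hEv
  refine ⟨Q₀, ?_⟩
  intro Q hQ n hn hsq hnQ z hz1 hzQ
  obtain ⟨h3, hE2⟩ := hQ₀ Q hQ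
  set lq := Real.log Q with hlqdef
  set ll := Real.log lq with hlldef
  have hlq0 : (0 : ℝ) < lq := by linarith
  have hQ1 : (1 : ℝ) ≤ Q := le_trans (by exact_mod_cast hn) hnQ
  have hQ0 : (0 : ℝ) < Q := lt_of_lt_of_le one_pos hQ1
  have hll1 : (1 : ℝ) ≤ ll := by
    have he3 : Real.exp 1 ≤ 3 := (Real.exp_one_lt_d9.trans (by norm_num)).le
    have h13 : (1 : ℝ) ≤ Real.log 3 := (Real.le_log_iff_exp_le (by norm_num)).2 he3
    have := Real.log_le_log (by norm_num : (0:ℝ) < 3) h3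
    rw [hlldef]; linarith
  have hll0 : (0 : ℝ) < ll := lt_of_lt_of_le one_pos hll1
  set y := lq ^ α with hydef
  have hy1 : 1 < y := by
    rw [hydef]
    exact (Real.one_lt_rpow_iff_of_pos hlq0).2 (Or.inl ⟨by linarith, hα0⟩)
  have hy0 : (0 : ℝ) ≤ y := by linarith
  have hly : Real.log y = α * ll := by rw [hydef, Real.log_rpow hlq0]
  have hly0 : (0 : ℝ) < Real.log y := by rw [hly]; positivity
  set m := ⌊δ * lq / Real.log y⌋₊ with hmdef
  have hm : ∀ j : ℕ, y ^ j ≤ z → j ≤ m := by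
    intro j hj
    apply Nat.le_floor
    have h1 : (j : ℝ) * Real.log y ≤ Real.log z := by
      rw [← Real.log_pow]
      exact Real.log_le_log (pow_pos (by linarith) j) hj
    have h2 : Real.log z ≤ δ * lq := by
      calc Real.log z ≤ Real.log (Q ^ δ) := Real.log_le_log (by linarith) hzQ
        _ = δ * lq := Real.log_rpow hQ0 δ
    rw [le_div_iff₀ hly0]
    linarith
  -- the two prime sets
  set Ps := n.primeFactors.filter (fun p : ℕ => (p : ℝ) ≤ y) with hPsdef
  set Pl := n.primeFactors.filter (fun p : ℕ => ¬ (p : ℝ) ≤ y) with hPldef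
  set s := Ps.card with hsdef
  set K := Pl.card with hKdef
  -- bound s
  have hsy : (s : ℝ) ≤ y := by
    have hsub : Ps ⊆ Finset.Ioc 1 ⌊y⌋₊ := by
      intro p hp
      rw [hPsdef, Finset.mem_filter] at hp
      exact Finset.mem_Ioc.2 ⟨(Nat.prime_of_mem_primeFactors hp.1).one_lt, Nat.le_floor hp.2⟩
    have h1 : s ≤ ⌊y⌋₊ := by
      have := Finset.card_le_card hsub
      rw [Nat.card_Ioc] at this
      omega
    calc (s : ℝ) ≤ (⌊y⌋₊ : ℝ) := by exact_mod_cast h1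
      _ ≤ y := Nat.floor_le hy0
  -- bound K
  have hKb : (K : ℝ) ≤ lq / Real.log y := by
    have h1 : y ^ K ≤ (n : ℝ) := by
      have ha : y ^ K ≤ ∏ p ∈ Pl, (p : ℝ) := by
        rw [← Finset.prod_const]
        refine Finset.prod_le_prod (fun _ _ => hy0) (fun p hp => ?_)
        rw [hPldef, Finset.mem_filter] at hp
        exact (not_le.1 hp.2).le
      have hb : (∏ p ∈ Pl, p) ∣ n := by
        calc (∏ p ∈ Pl, p) ∣ ∏ p ∈ n.primeFactors, p :=
            Finset.prod_dvd_prod_of_subset _ _ _ (Finset.filter_subset _ _)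
          _ = n := Nat.prod_primeFactors_of_squarefree hsq
      have hc : ((∏ p ∈ Pl, p : ℕ) : ℝ) ≤ (n : ℝ) := by
        exact_mod_cast Nat.le_of_dvd hn hb
      calc y ^ K ≤ ∏ p ∈ Pl, (p : ℝ) := ha
        _ = ((∏ p ∈ Pl, p : ℕ) : ℝ) := by push_cast; ring
        _ ≤ (n : ℝ) := hc
    have h2 : (K : ℝ) * Real.log y ≤ lq := by
      rw [← Real.log_pow]
      calc Real.log (y ^ K) ≤ Real.log (n : ℝ) :=
          Real.log_le_log (pow_pos (by linarith) K) h1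
        _ ≤ lq := Real.log_le_log (by exact_mod_cast hn) hnQ
    rw [le_div_iff₀ hly0]; linarith
  have hmb : (m : ℝ) ≤ δ * lq / Real.log y :=
    Nat.floor_le (div_nonneg (mul_nonneg hδ0.le hlq0.le) hly0.le)
  -- apply count_aux and sum_choose_le
  set x := δ / (1 - δ) with hxdef
  have hx0 : 0 < x := by rw [hxdef]; exact div_pos hδ0 (by linarith)
  have hx1 : x ≤ 1 := by
    rw [hxdef, div_le_one (by linarith)]; linarith
  have hcount : ((n.divisors.filter (fun d : ℕ => (d : ℝ) ≤ z)).card : ℝ) ≤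
      (2 : ℝ) ^ s * ((1 + x) ^ K / x ^ m) := by
    have h1 := count_aux n hn hsq z y hy0 m hm
    have h2 : ((n.divisors.filter (fun d : ℕ => (d : ℝ) ≤ z)).card : ℝ) ≤
        (2 : ℝ) ^ s * ∑ j ∈ Finset.range (m + 1), (K.choose j : ℝ) := by
      exact_mod_cast h1
    refine h2.trans ?_
    refine mul_le_mul_of_nonneg_left ?_ (pow_nonneg (by norm_num : (0:ℝ) ≤ 2) s)
    rw [le_div_iff₀ (pow_pos hx0 m)]
    exact sum_choose_le K m x hx0 hx1
  refine hcount.trans ?_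
  -- rewrite RHS-of-count as exp
  have he1 : (2 : ℝ) ^ s = Real.exp ((s : ℝ) * Real.log 2) := by
    rw [Real.exp_nat_mul, Real.exp_log two_pos]
  have he2 : (1 + x) ^ K = Real.exp ((K : ℝ) * Real.log (1 + x)) := by
    rw [Real.exp_nat_mul, Real.exp_log (by linarith : (0:ℝ) < 1 + x)]
  have he3 : x ^ m = Real.exp ((m : ℝ) * Real.log x) := by
    rw [Real.exp_nat_mul, Real.exp_log hx0]
  have hexp : (2 : ℝ) ^ s * ((1 + x) ^ K / x ^ m) =
      Real.exp ((s : ℝ) * Real.log 2 + (K : ℝ) * Real.log (1 + x) - (m : ℝ) * Real.log x) := by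
    rw [he1, he2, he3, ← Real.exp_sub, ← Real.exp_add]
    exact congrArg Real.exp (by ring)
  rw [hexp]
  apply Real.exp_le_exp.2
  -- final exponent computation
  set L := lq / ll with hLdef
  have hL0 : (0 : ℝ) < L := by rw [hLdef]; positivity
  -- part (a)
  have ha : (s : ℝ) * Real.log 2 ≤ ε * L := by
    have h1 : y * Real.log 2 * ll ≤ ε * lq := hE2
    have h2 : (s : ℝ) * Real.log 2 ≤ y * Real.log 2 :=
      mul_le_mul_of_nonneg_right hsy (Real.log_nonneg one_le_two)
    have h3 : y * Real.log 2 ≤ ε * lq / ll := by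
      rw [le_div_iff₀ hll0]; linarith only [h1]
    rw [hLdef]
    calc (s : ℝ) * Real.log 2 ≤ ε * lq / ll := le_trans h2 h3
      _ = ε * (lq / ll) := by ring
  -- entropy identity
  have h1δ : (1 : ℝ) - δ ≠ 0 := by linarith
  set H := δ * Real.log (1 / δ) + (1 - δ) * Real.log (1 / (1 - δ)) with hHdef
  have hl1x : Real.log (1 + x) = -Real.log (1 - δ) := by
    have hinv : (1 : ℝ) + x = (1 - δ)⁻¹ := by
      rw [hxdef]
      field_simp
      ring
    rw [hinv, Real.log_inv]
  have hlx : Real.log x = Real.log δ - Real.log (1 - δ) := by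
    rw [hxdef, Real.log_div (ne_of_gt hδ0) h1δ]
  have hHx : Real.log (1 + x) - δ * Real.log x = H := by
    rw [hHdef, hl1x, hlx, one_div, one_div, Real.log_inv, Real.log_inv]
    ring
  have hH1 : H ≤ 1 := by
    have h1 : Real.log (1 / δ) ≤ 1 / δ - 1 := Real.log_le_sub_one_of_pos (by positivity)
    have h2 : Real.log (1 / (1 - δ)) ≤ 1 / (1 - δ) - 1 :=
      Real.log_le_sub_one_of_pos (div_pos one_pos (by linarith))
    have h3 : δ * Real.log (1 / δ) ≤ 1 - δ := by
      have := mul_le_mul_of_nonneg_left h1 hδ0.le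
      calc δ * Real.log (1 / δ) ≤ δ * (1 / δ - 1) := this
        _ = 1 - δ := by field_simp
    have h4 : (1 - δ) * Real.log (1 / (1 - δ)) ≤ δ := by
      have := mul_le_mul_of_nonneg_left h2 (by linarith : (0:ℝ) ≤ 1 - δ)
      calc (1 - δ) * Real.log (1 / (1 - δ)) ≤ (1 - δ) * (1 / (1 - δ) - 1) := this
        _ = δ := by field_simp; ring
    rw [hHdef]; linarith only [h3, h4]
  have hH0 : 0 ≤ H := by
    rw [hHdef]
    have h1 : 0 ≤ Real.log (1 / δ) := Real.log_nonneg (one_le_one_div hδ0 hδ1.le)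
    have h2 : 0 ≤ Real.log (1 / (1 - δ)) :=
      Real.log_nonneg (one_le_one_div (by linarith) (by linarith))
    have h5 : 0 ≤ δ * Real.log (1 / δ) := mul_nonneg hδ0.le h1
    have h6 : 0 ≤ (1 - δ) * Real.log (1 / (1 - δ)) := mul_nonneg (by linarith) h2
    linarith only [h5, h6]
  -- part (b)+(c)
  have hLy : lq / Real.log y = (1 + ε) * L := by
    have hll' : ll ≠ 0 := ne_of_gt hll0
    have hε' : (1 : ℝ) + ε ≠ 0 := by positivity
    rw [hly, hLdef, hαdef]
    field_simp
  have hlog1x : (0 : ℝ) ≤ Real.log (1 + x) := Real.log_nonneg (by linarith)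
  have hlogx : Real.log x ≤ 0 := Real.log_nonpos hx0.le hx1
  have hbc : (K : ℝ) * Real.log (1 + x) - (m : ℝ) * Real.log x ≤ (1 + ε) * L * H := by
    have hb : (K : ℝ) * Real.log (1 + x) ≤ (lq / Real.log y) * Real.log (1 + x) :=
      mul_le_mul_of_nonneg_right hKb hlog1x
    have hc : -((m : ℝ) * Real.log x) ≤ (δ * lq / Real.log y) * (- Real.log x) := by
      have := mul_le_mul_of_nonneg_right hmb (neg_nonneg.2 hlogx)
      linarith only [this]
    have : (K : ℝ) * Real.log (1 + x) - (m : ℝ) * Real.log x ≤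
        (lq / Real.log y) * (Real.log (1 + x) - δ * Real.log x) := by
      have e2 : (lq / Real.log y) * (Real.log (1 + x) - δ * Real.log x) =
          (lq / Real.log y) * Real.log (1 + x) + (δ * lq / Real.log y) * (- Real.log x) := by
        ring
      linarith only [hb, hc, e2]
    rw [hHx] at this
    rwa [hLy] at this
  have hfinal : (1 + ε) * L * H + ε * L ≤ (H + η) * L := by
    have h1 : (1 + ε) * L * H = L * H + ε * (L * H) := by ring
    have h2 : ε * (L * H) ≤ ε * (L * 1) :=
      mul_le_mul_of_nonneg_left (mul_le_mul_of_nonneg_left hH1 hL0.le) hε0.le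
    have e2' : ε * (L * 1) = ε * L := by ring
    have e3 : (H + η) * L = L * H + 2 * (ε * L) := by rw [hεdef]; ring
    linarith only [h1, h2, e2', e3]
  calc (s : ℝ) * Real.log 2 + (K : ℝ) * Real.log (1 + x) - (m : ℝ) * Real.log x
      ≤ ε * L + (1 + ε) * L * H := by linarith only [ha, hbc]
    _ ≤ (H + η) * L := by linarith only [hfinal]
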